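/- Let H₁, H₂, H₃ be finite-dimensional complex inner product spaces, g : H₁ → H₂ and f : H₂ → H₃ conjugate-linear maps, and φ ∈ H₁. Then (P_g ⊗ id_{H₃})(α(φ ⊗ₜ Ψ_f)) = Ψ_g ⊗ₜ ((f ∘ g) φ), where α : H₁ ⊗ (H₂ ⊗ H₃) ≃ (H₁ ⊗ H₂) ⊗ H₃ is the canonical associator and f ∘ g : H₁ → H₃ is ℂ-linear. (This is the basic teleportation identity: projecting the first two factors of φ ⊗ Ψ_f onto the state Ψ_g leaves the third factor exactly in the state (f ∘ g)(φ).) -/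

import Mathlib

open scoped TensorProduct ComplexConjugate ComplexInnerProductSpace

noncomputable section

/-- The state `Ψ_f = ∑ i, b i ⊗ₜ f (b i)` associated to a conjugate-linear map `f`
and an orthonormal basis `b`. -/
def PsiState {H₁ H₂ : Type*} [NormedAddCommGroup H₁] [InnerProductSpace ℂ H₁]
    [NormedAddCommGroup H₂] [InnerProductSpace ℂ H₂]
    {ι : Type*} [Fintype ι] (b : OrthonormalBasis ι ℂ H₁) (f : H₁ →ₗ⋆[ℂ] H₂) :
    H₁ ⊗[ℂ] H₂ := ∑ i, b i ⊗ₜ[ℂ] f (b i)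

/-- The functional `ε_g : H₁ ⊗ H₂ →ₗ[ℂ] ℂ`, `ε_g (φ ⊗ₜ ψ) = ⟪g φ, ψ⟫`, associated to a
conjugate-linear map `g`. -/
def epsFun {H₁ H₂ : Type*} [NormedAddCommGroup H₁] [InnerProductSpace ℂ H₁]
    [NormedAddCommGroup H₂] [InnerProductSpace ℂ H₂] (g : H₁ →ₗ⋆[ℂ] H₂) :
    H₁ ⊗[ℂ] H₂ →ₗ[ℂ] ℂ :=
  TensorProduct.lift <| LinearMap.mk₂ ℂ (fun φ ψ => ⟪g φ, ψ⟫)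
    (fun φ φ' ψ => by simp [inner_add_left])
    (fun c φ ψ => by simp [inner_smul_left, mul_comm])
    (fun φ ψ ψ' => by simp [inner_add_right])
    (fun c φ ψ => by simp [inner_smul_right])

/-- The (unnormalized) projector `P_g x = ε_g x • Ψ_g` onto the state `Ψ_g` of a
conjugate-linear map `g`. -/
def Pproj {H₁ H₂ : Type*} [NormedAddCommGroup H₁] [InnerProductSpace ℂ H₁]
    [NormedAddCommGroup H₂] [InnerProductSpace ℂ H₂]
    {ι : Type*} [Fintype ι] (b : OrthonormalBasis ι ℂ H₁) (g : H₁ →ₗ⋆[ℂ] H₂) :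
    H₁ ⊗[ℂ] H₂ →ₗ[ℂ] H₁ ⊗[ℂ] H₂ :=
  (epsFun g).smulRight (PsiState b g)

/-- the basic teleportation identity
`(P_g ⊗ id)(α(φ ⊗ₜ Ψ_f)) = Ψ_g ⊗ₜ ((f ∘ g) φ)`. -/
theorem teleportation_identity
    {H₁ H₂ H₃ : Type*}
    [NormedAddCommGroup H₁] [InnerProductSpace ℂ H₁] [FiniteDimensional ℂ H₁]
    [NormedAddCommGroup H₂] [InnerProductSpace ℂ H₂] [FiniteDimensional ℂ H₂]
    [NormedAddCommGroup H₃] [InnerProductSpace ℂ H₃] [FiniteDimensional ℂ H₃]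
    {ι₁ ι₂ : Type*} [Fintype ι₁] [Fintype ι₂]
    (b₁ : OrthonormalBasis ι₁ ℂ H₁) (b₂ : OrthonormalBasis ι₂ ℂ H₂)
    (g : H₁ →ₗ⋆[ℂ] H₂) (f : H₂ →ₗ⋆[ℂ] H₃) (φ : H₁) :
    TensorProduct.map (Pproj b₁ g) (LinearMap.id (R := ℂ) (M := H₃))
        ((TensorProduct.assoc ℂ H₁ H₂ H₃).symm (φ ⊗ₜ[ℂ] PsiState b₂ f))
      = PsiState b₁ g ⊗ₜ[ℂ] f (g φ) := by
  have key : ∑ j, (⟪g φ, b₂ j⟫ : ℂ) • f (b₂ j) = f (g φ) := by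
    conv_rhs => rw [← b₂.sum_repr' (g φ)]
    rw [map_sum]
    refine Finset.sum_congr rfl fun j _ => ?_
    rw [LinearMap.map_smulₛₗ]
    simp
  calc TensorProduct.map (Pproj b₁ g) (LinearMap.id (R := ℂ) (M := H₃))
        ((TensorProduct.assoc ℂ H₁ H₂ H₃).symm (φ ⊗ₜ[ℂ] PsiState b₂ f))
      = ∑ j, PsiState b₁ g ⊗ₜ[ℂ] ((⟪g φ, b₂ j⟫ : ℂ) • f (b₂ j)) := by
        simp [PsiState, TensorProduct.tmul_sum, map_sum, Pproj, epsFun,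
          TensorProduct.smul_tmul, LinearMap.smulRight_apply]
    _ = PsiState b₁ g ⊗ₜ[ℂ] f (g φ) := by
        rw [← TensorProduct.tmul_sum, key]
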